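/- arXiv:2206.03433 — 2 statements merged into one kernel-verified Lean document; each statement's English description precedes it below -/
import Mathlib

section
/- Let n ≥ 4 be even. The ℚ-linear map I : Θ_n → Θ_{n+1} determined on basis symbols by I([a,b,c]^l) = (1/(l+1))·[a,b,c]^{l+1} is well defined (every basis symbol of Θ_n has l ∈ {0,1} and its image is a nonzero basis symbol of Θ_{n+1}), is a linear isomorphism of Θ_n onto Θ_{n+1}, and commutes with the differential: d ∘ I = I ∘ d on Θ_n. -/
/-- Validity condition for a theta-graph basis symbol `[a,b,c]^l`:
`0 ≤ a < b < c`, `l ∈ {0,1,2}`, with the parity conventions that `l = 0`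
requires `a + b + c` even and `l = 2` requires `a + b + c` odd. -/
def validSym (a b c l : ℤ) : Prop :=
  0 ≤ a ∧ a < b ∧ b < c ∧ (l = 0 ∨ l = 1 ∨ l = 2) ∧
    (l = 0 → Even (a + b + c)) ∧ (l = 2 → Odd (a + b + c))

/-- The indexing set of valid theta symbols. -/
def SymIdx : Type := {p : ℤ × ℤ × ℤ × ℤ // validSym p.1 p.2.1 p.2.2.1 p.2.2.2}

/-- The theta space `Θ`: the free `ℚ`-vector space on the valid symbols. -/
abbrev Theta : Type := SymIdx →₀ ℚ

/-- The symbol `[a,b,c]^l ∈ Θ`, extended by `0` when the validity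
conditions fail. -/
noncomputable def sym (a b c l : ℤ) : Theta := by
  classical
  exact if h : validSym a b c l then Finsupp.single ⟨(a, b, c, l), h⟩ 1 else 0

/-- Value of the differential on a basis symbol. -/
noncomputable def dAux (p : SymIdx) : Theta := by
  classical
  exact
    if p.1.2.2.2 = 1 then
      sym (p.1.1 + 1) p.1.2.1 p.1.2.2.1 0 - sym p.1.1 (p.1.2.1 + 1) p.1.2.2.1 0
        + sym p.1.1 p.1.2.1 (p.1.2.2.1 + 1) 0
    else if p.1.2.2.2 = 2 then
      (2 : ℚ) • (sym (p.1.1 + 1) p.1.2.1 p.1.2.2.1 1 - sym p.1.1 (p.1.2.1 + 1) p.1.2.2.1 1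
        + sym p.1.1 p.1.2.1 (p.1.2.2.1 + 1) 1)
    else 0

/-- The `ℚ`-linear differential `d : Θ → Θ`, given on basis symbols by
`d [a,b,c]^0 = 0`, `d [a,b,c]^1 = [a+1,b,c]^0 - [a,b+1,c]^0 + [a,b,c+1]^0`,
`d [a,b,c]^2 = 2([a+1,b,c]^1 - [a,b+1,c]^1 + [a,b,c+1]^1)`. -/
noncomputable def dTheta : Theta →ₗ[ℚ] Theta :=
  Finsupp.lsum ℚ fun p => LinearMap.toSpanSingleton ℚ Theta (dAux p)

/-- The weight-`n` part `Θ_n`: the span of the symbols `[a,b,c]^l` with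
`a + b + c + l = n`. -/
noncomputable def ThetaN (n : ℤ) : Submodule ℚ Theta :=
  Submodule.span ℚ {x | ∃ a b c l : ℤ, a + b + c + l = n ∧ x = sym a b c l}

/- ## Auxiliary material -/

lemma sym_valid {a b c l : ℤ} (h : validSym a b c l) :
    sym a b c l = Finsupp.single (⟨(a, b, c, l), h⟩ : SymIdx) 1 := by
  unfold sym; exact dif_pos h

lemma sym_not_valid {a b c l : ℤ} (h : ¬ validSym a b c l) : sym a b c l = 0 := by
  simp [sym, h]

lemma sym_ne_zero {a b c l : ℤ} (h : validSym a b c l) : sym a b c l ≠ 0 := by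
  rw [sym_valid h]
  exact Finsupp.single_ne_zero.mpr one_ne_zero

lemma lsum_sym_valid (g : SymIdx → Theta) {a b c l : ℤ} (h : validSym a b c l) :
    (Finsupp.lsum ℚ fun p => LinearMap.toSpanSingleton ℚ Theta (g p)) (sym a b c l)
      = g ⟨(a, b, c, l), h⟩ := by
  rw [sym_valid h]
  exact (Finsupp.lsum_single (S := ℚ) (fun p => LinearMap.toSpanSingleton ℚ Theta (g p)) _ (1 : ℚ)).trans (by simp)

lemma lsum_sym_not (g : SymIdx → Theta) {a b c l : ℤ} (h : ¬ validSym a b c l) :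
    (Finsupp.lsum ℚ fun p => LinearMap.toSpanSingleton ℚ Theta (g p)) (sym a b c l)
      = 0 := by
  rw [sym_not_valid h, map_zero]

lemma dAux_zero {a b c : ℤ} (h : validSym a b c 0) : dAux ⟨(a, b, c, 0), h⟩ = 0 := by
  simp [dAux]

lemma dAux_one {a b c : ℤ} (h : validSym a b c 1) :
    dAux ⟨(a, b, c, 1), h⟩
      = sym (a + 1) b c 0 - sym a (b + 1) c 0 + sym a b (c + 1) 0 := by
  simp [dAux]

lemma dAux_two {a b c : ℤ} (h : validSym a b c 2) :
    dAux ⟨(a, b, c, 2), h⟩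
      = (2 : ℚ) • (sym (a + 1) b c 1 - sym a (b + 1) c 1 + sym a b (c + 1) 1) := by
  simp [dAux]

/-- The integration map as a globally defined linear map. -/
noncomputable def Jmap : Theta →ₗ[ℚ] Theta :=
  Finsupp.lsum ℚ fun p => LinearMap.toSpanSingleton ℚ Theta
    ((1 / ((p.1.2.2.2 : ℚ) + 1)) • sym p.1.1 p.1.2.1 p.1.2.2.1 (p.1.2.2.2 + 1))

/-- The candidate inverse of integration. -/
noncomputable def Kmap : Theta →ₗ[ℚ] Theta :=
  Finsupp.lsum ℚ fun p => LinearMap.toSpanSingleton ℚ Theta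
    ((p.1.2.2.2 : ℚ) • sym p.1.1 p.1.2.1 p.1.2.2.1 (p.1.2.2.2 - 1))

lemma Jmap_sym_valid {a b c l : ℤ} (h : validSym a b c l) :
    Jmap (sym a b c l) = (1 / ((l : ℚ) + 1)) • sym a b c (l + 1) :=
  lsum_sym_valid _ h

lemma Kmap_sym_valid {a b c l : ℤ} (h : validSym a b c l) :
    Kmap (sym a b c l) = (l : ℚ) • sym a b c (l - 1) :=
  lsum_sym_valid _ h

lemma dTheta_sym_valid {a b c l : ℤ} (h : validSym a b c l) :
    dTheta (sym a b c l) = dAux ⟨(a, b, c, l), h⟩ := by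
  have := lsum_sym_valid dAux h
  simpa [dTheta] using this

lemma sym_mem {a b c l n : ℤ} (hw : a + b + c + l = n) : sym a b c l ∈ ThetaN n :=
  Submodule.subset_span ⟨a, b, c, l, hw, rfl⟩

lemma sym_zero_of_not_ord {x y z l : ℤ} (h : ¬ (0 ≤ x ∧ x < y ∧ y < z)) :
    sym x y z l = 0 := by
  apply sym_not_valid
  intro hv
  exact h ⟨hv.1, hv.2.1, hv.2.2.1⟩

lemma sym0_zero_of_odd {x y z : ℤ} (h : Odd (x + y + z)) : sym x y z 0 = 0 := by
  apply sym_not_valid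
  intro hv
  have h2 := hv.2.2.2.2.1 rfl
  rw [Int.even_iff] at h2
  rw [Int.odd_iff] at h
  omega

lemma valid1_of_valid0 {a b c : ℤ} (h : validSym a b c 0) : validSym a b c 1 :=
  ⟨h.1, h.2.1, h.2.2.1, Or.inr (Or.inl rfl),
    fun hh => absurd hh (by norm_num), fun hh => absurd hh (by norm_num)⟩

lemma valid2_of_valid1 {a b c : ℤ} (h : validSym a b c 1) (ho : Odd (a + b + c)) :
    validSym a b c 2 :=
  ⟨h.1, h.2.1, h.2.2.1, Or.inr (Or.inr rfl),
    fun hh => absurd hh (by norm_num), fun _ => ho⟩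

lemma valid0_of_valid1 {a b c : ℤ} (h : validSym a b c 1) (he : Even (a + b + c)) :
    validSym a b c 0 :=
  ⟨h.1, h.2.1, h.2.2.1, Or.inl rfl, fun _ => he, fun hh => absurd hh (by norm_num)⟩

lemma valid1_of_valid2 {a b c : ℤ} (h : validSym a b c 2) : validSym a b c 1 :=
  ⟨h.1, h.2.1, h.2.2.1, Or.inr (Or.inl rfl),
    fun hh => absurd hh (by norm_num), fun hh => absurd hh (by norm_num)⟩

/-- Integration of an `l = 0` symbol of even total degree. -/
lemma Jmap_sym0 {x y z : ℤ} (hev : Even (x + y + z)) :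
    Jmap (sym x y z 0) = sym x y z 1 := by
  by_cases h : validSym x y z 0
  · rw [Jmap_sym_valid h]
    norm_num
  · rw [sym_not_valid h, map_zero]
    symm
    apply sym_zero_of_not_ord
    intro ho
    exact h ⟨ho.1, ho.2.1, ho.2.2, Or.inl rfl, fun _ => hev,
      fun hh => absurd hh (by norm_num)⟩

/-- `l ∈ {0,1}` for a valid symbol of even weight. -/
lemma even_weight_l {a b c l n : ℤ} (hne : Even n) (h : validSym a b c l)
    (hw : a + b + c + l = n) : l = 0 ∨ l = 1 := by
  rcases h.2.2.2.1 with h0 | h1 | h2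
  · exact Or.inl h0
  · exact Or.inr h1
  · exfalso
    have ho := h.2.2.2.2.2 h2
    rw [Int.even_iff] at hne
    rw [Int.odd_iff] at ho
    omega

/-- `l ∈ {1,2}` for a valid symbol of odd weight. -/
lemma odd_weight_l {a b c l n : ℤ} (hne : Even n) (h : validSym a b c l)
    (hw : a + b + c + l = n + 1) : l = 1 ∨ l = 2 := by
  rcases h.2.2.2.1 with h0 | h1 | h2
  · exfalso
    have he := h.2.2.2.2.1 h0
    rw [Int.even_iff] at hne he
    omega
  · exact Or.inl h1
  · exact Or.inr h2

/-- For even `n ≥ 4`, the integration map `I : Θ_n → Θ_{n+1}`,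
`[a,b,c]^l ↦ (1/(l+1)) ⬝ [a,b,c]^{l+1}`, is well defined (every valid basis
symbol of weight `n` has `l ∈ {0,1}` and its image is a nonzero basis symbol),
is a linear isomorphism `Θ_n ≃ Θ_{n+1}`, and commutes with `d`. -/
theorem integration_iso (n : ℤ) (hn : 4 ≤ n) (hne : Even n) :
    (∀ a b c l : ℤ, validSym a b c l → a + b + c + l = n →
      (l = 0 ∨ l = 1) ∧ sym a b c (l + 1) ≠ 0) ∧
    ∃ (hd : ∀ x ∈ ThetaN n, dTheta x ∈ ThetaN n)
      (e : ThetaN n ≃ₗ[ℚ] ThetaN (n + 1)),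
      (∀ (a b c l : ℤ) (h : sym a b c l ∈ ThetaN n), a + b + c + l = n →
        ((e ⟨sym a b c l, h⟩ : Theta) = (1 / ((l : ℚ) + 1)) • sym a b c (l + 1))) ∧
      (∀ x : ThetaN n, dTheta ((e x : ThetaN (n + 1)) : Theta)
          = ((e ⟨dTheta (x : Theta), hd (x : Theta) x.2⟩ : ThetaN (n + 1)) : Theta)) := by
  classical
  -- d preserves the weight-n part
  have hdmem : ∀ x ∈ ThetaN n, dTheta x ∈ ThetaN n := by
    intro x hx
    induction hx using Submodule.span_induction with
    | mem x hx =>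
      obtain ⟨a, b, c, l, hw, rfl⟩ := hx
      by_cases hv : validSym a b c l
      · rw [dTheta_sym_valid hv]
        simp only [dAux]
        split
        · next hl =>
          refine add_mem (sub_mem ?_ ?_) ?_ <;> apply sym_mem <;> omega
        · split
          · next hl =>
            refine Submodule.smul_mem _ _ (add_mem (sub_mem ?_ ?_) ?_) <;>
              apply sym_mem <;> omega
          · exact zero_mem _
      · rw [sym_not_valid hv, map_zero]; exact zero_mem _
    | zero => rw [map_zero]; exact zero_mem _
    | add x y hx hy ihx ihy => rw [map_add]; exact add_mem ihx ihy
    | smul r x hx ihx => rw [map_smul]; exact Submodule.smul_mem _ _ ihx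
  -- J maps weight n into weight n+1
  have hJmem : ∀ x ∈ ThetaN n, Jmap x ∈ ThetaN (n + 1) := by
    intro x hx
    induction hx using Submodule.span_induction with
    | mem x hx =>
      obtain ⟨a, b, c, l, hw, rfl⟩ := hx
      by_cases hv : validSym a b c l
      · rw [Jmap_sym_valid hv]
        exact Submodule.smul_mem _ _ (sym_mem (by omega))
      · rw [sym_not_valid hv, map_zero]; exact zero_mem _
    | zero => rw [map_zero]; exact zero_mem _
    | add x y hx hy ihx ihy => rw [map_add]; exact add_mem ihx ihy
    | smul r x hx ihx => rw [map_smul]; exact Submodule.smul_mem _ _ ihx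
  -- K maps weight n+1 into weight n
  have hKmem : ∀ x ∈ ThetaN (n + 1), Kmap x ∈ ThetaN n := by
    intro x hx
    induction hx using Submodule.span_induction with
    | mem x hx =>
      obtain ⟨a, b, c, l, hw, rfl⟩ := hx
      by_cases hv : validSym a b c l
      · rw [Kmap_sym_valid hv]
        exact Submodule.smul_mem _ _ (sym_mem (by omega))
      · rw [sym_not_valid hv, map_zero]; exact zero_mem _
    | zero => rw [map_zero]; exact zero_mem _
    | add x y hx hy ihx ihy => rw [map_add]; exact add_mem ihx ihy
    | smul r x hx ihx => rw [map_smul]; exact Submodule.smul_mem _ _ ihx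
  -- K ∘ J = id on weight n
  have hKJ : ∀ x ∈ ThetaN n, Kmap (Jmap x) = x := by
    intro x hx
    induction hx using Submodule.span_induction with
    | mem x hx =>
      obtain ⟨a, b, c, l, hw, rfl⟩ := hx
      by_cases hv : validSym a b c l
      · rcases even_weight_l hne hv hw with hl | hl <;> subst hl
        · have h1 : validSym a b c 1 := valid1_of_valid0 hv
          rw [Jmap_sym_valid hv, map_smul, show (0 : ℤ) + 1 = 1 from by norm_num,
            Kmap_sym_valid h1, show (1 : ℤ) - 1 = 0 from by norm_num, smul_smul]
          norm_num
        · have ho : Odd (a + b + c) := by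
            rw [Int.odd_iff]; rw [Int.even_iff] at hne; omega
          have h2 : validSym a b c 2 := valid2_of_valid1 hv ho
          rw [Jmap_sym_valid hv, map_smul, show (1 : ℤ) + 1 = 2 from by norm_num,
            Kmap_sym_valid h2, show (2 : ℤ) - 1 = 1 from by norm_num, smul_smul]
          norm_num
      · rw [sym_not_valid hv, map_zero, map_zero]
    | zero => rw [map_zero, map_zero]
    | add x y hx hy ihx ihy => rw [map_add, map_add, ihx, ihy]
    | smul r x hx ihx => rw [map_smul, map_smul, ihx]
  -- J ∘ K = id on weight n+1
  have hJK : ∀ x ∈ ThetaN (n + 1), Jmap (Kmap x) = x := by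
    intro x hx
    induction hx using Submodule.span_induction with
    | mem x hx =>
      obtain ⟨a, b, c, l, hw, rfl⟩ := hx
      by_cases hv : validSym a b c l
      · rcases odd_weight_l hne hv hw with hl | hl <;> subst hl
        · have he : Even (a + b + c) := by
            rw [Int.even_iff] at hne ⊢; omega
          have h0 : validSym a b c 0 := valid0_of_valid1 hv he
          rw [Kmap_sym_valid hv, map_smul, show (1 : ℤ) - 1 = 0 from by norm_num,
            Jmap_sym0 he]
          norm_num
        · have h1 : validSym a b c 1 := valid1_of_valid2 hv
          rw [Kmap_sym_valid hv, map_smul, show (2 : ℤ) - 1 = 1 from by norm_num,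
            Jmap_sym_valid h1, show (1 : ℤ) + 1 = 2 from by norm_num, smul_smul]
          norm_num
      · rw [sym_not_valid hv, map_zero, map_zero]
    | zero => rw [map_zero, map_zero]
    | add x y hx hy ihx ihy => rw [map_add, map_add, ihx, ihy]
    | smul r x hx ihx => rw [map_smul, map_smul, ihx]
  -- d commutes with J on weight n
  have hcomm : ∀ x ∈ ThetaN n, dTheta (Jmap x) = Jmap (dTheta x) := by
    intro x hx
    induction hx using Submodule.span_induction with
    | mem x hx =>
      obtain ⟨a, b, c, l, hw, rfl⟩ := hx
      by_cases hv : validSym a b c l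
      · have hev : Even (a + b + c + l) := hw ▸ hne
        rcases even_weight_l hne hv hw with hl | hl <;> subst hl
        · -- l = 0
          have h1 : validSym a b c 1 := valid1_of_valid0 hv
          have he : Even (a + b + c) := hv.2.2.2.2.1 rfl
          have ho1 : Odd (a + 1 + b + c) := by
            rw [Int.odd_iff]; rw [Int.even_iff] at he; omega
          have ho2 : Odd (a + (b + 1) + c) := by
            rw [Int.odd_iff]; rw [Int.even_iff] at he; omega
          have ho3 : Odd (a + b + (c + 1)) := by
            rw [Int.odd_iff]; rw [Int.even_iff] at he; omega
          rw [Jmap_sym0 he, dTheta_sym_valid h1, dAux_one h1,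
            sym0_zero_of_odd ho1, sym0_zero_of_odd ho2, sym0_zero_of_odd ho3,
            dTheta_sym_valid hv, dAux_zero hv, map_zero]
          simp
        · -- l = 1
          have ho : Odd (a + b + c) := by
            rw [Int.odd_iff]; rw [Int.even_iff] at hne; omega
          have h2 : validSym a b c 2 := valid2_of_valid1 hv ho
          have he1 : Even (a + 1 + b + c) := by
            rw [Int.even_iff]; rw [Int.odd_iff] at ho; omega
          have he2 : Even (a + (b + 1) + c) := by
            rw [Int.even_iff]; rw [Int.odd_iff] at ho; omega
          have he3 : Even (a + b + (c + 1)) := by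
            rw [Int.even_iff]; rw [Int.odd_iff] at ho; omega
          rw [Jmap_sym_valid hv, map_smul, show (1 : ℤ) + 1 = 2 from by norm_num,
            dTheta_sym_valid h2, dAux_two h2, dTheta_sym_valid hv, dAux_one hv,
            map_add, map_sub, Jmap_sym0 he1, Jmap_sym0 he2, Jmap_sym0 he3, smul_smul]
          norm_num
      · rw [sym_not_valid hv, map_zero, map_zero, map_zero]
    | zero => rw [map_zero, map_zero, map_zero]
    | add x y hx hy ihx ihy => simp [map_add, ihx, ihy]
    | smul r x hx ihx => simp [map_smul, ihx]
  constructor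
  · -- first conjunct: well-definedness
    intro a b c l hv hw
    rcases even_weight_l hne hv hw with hl | hl <;> subst hl
    · refine ⟨Or.inl rfl, ?_⟩
      have h1 : validSym a b c 1 := valid1_of_valid0 hv
      rw [show (0 : ℤ) + 1 = 1 from by norm_num]
      exact sym_ne_zero h1
    · refine ⟨Or.inr rfl, ?_⟩
      have ho : Odd (a + b + c) := by
        rw [Int.odd_iff]; rw [Int.even_iff] at hne; omega
      have h2 : validSym a b c 2 := valid2_of_valid1 hv ho
      rw [show (1 : ℤ) + 1 = 2 from by norm_num]
      exact sym_ne_zero h2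
  · refine ⟨hdmem, ?_⟩
    refine ⟨LinearEquiv.ofLinear (Jmap.restrict hJmem) (Kmap.restrict hKmem)
      (LinearMap.ext fun x => Subtype.ext ?_) (LinearMap.ext fun x => Subtype.ext ?_),
      ?_, ?_⟩
    · simpa using hJK x.1 x.2
    · simpa using hKJ x.1 x.2
    · intro a b c l h hw
      simp only [LinearEquiv.ofLinear_apply, LinearMap.restrict_coe_apply]
      by_cases hv : validSym a b c l
      · exact Jmap_sym_valid hv
      · rw [sym_not_valid hv, map_zero]
        symm
        by_cases h1 : validSym a b c (l + 1)
        · rcases h1.2.2.2.1 with h0 | hh1 | hh2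
          · have hl : l = -1 := by omega
            subst hl
            norm_num
          · exfalso
            have hl : l = 0 := by omega
            subst hl
            have he : Even (a + b + c) := by
              rw [Int.even_iff]; rw [Int.even_iff] at hne; omega
            exact hv ⟨h1.1, h1.2.1, h1.2.2.1, Or.inl rfl, fun _ => he,
              fun hh => absurd hh (by norm_num)⟩
          · exfalso
            have hl : l = 1 := by omega
            subst hl
            exact hv ⟨h1.1, h1.2.1, h1.2.2.1, Or.inr (Or.inl rfl),
              fun hh => absurd hh (by norm_num), fun hh => absurd hh (by norm_num)⟩
        · rw [sym_not_valid h1, smul_zero]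
    · intro x
      simp only [LinearEquiv.ofLinear_apply, LinearMap.restrict_coe_apply]
      exact hcomm x.1 x.2
end

section
/- Let n ≥ 4 be even, and let V_0 ⊂ Θ_n be the span of the basis symbols [a,b,c]^0 with a+b+c = n, and V_1 ⊂ Θ_n the span of the basis symbols [a,b,c]^1 with a+b+c = n−1. Then every element of V_0 is congruent, modulo the subspace d(V_1) ⊂ V_0, to a ℚ-linear combination of symbols of the form [0,b,c]^0 with 0 < b < c and b + c = n. (Equivalently, the quotient V_0 / d(V_1) is spanned by the classes of the symbols [0,b,c]^0.) -/
/-- `V_0 ⊂ Θ_n`: the span of the symbols `[a,b,c]^0` with `a + b + c = n`. -/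
noncomputable def V0 (n : ℤ) : Submodule ℚ Theta :=
  Submodule.span ℚ {x | ∃ a b c : ℤ, a + b + c = n ∧ x = sym a b c 0}

/-- `V_1 ⊂ Θ_n`: the span of the symbols `[a,b,c]^1` with `a + b + c = n - 1`. -/
noncomputable def V1 (n : ℤ) : Submodule ℚ Theta :=
  Submodule.span ℚ {x | ∃ a b c : ℤ, a + b + c = n - 1 ∧ x = sym a b c 1}

lemma dTheta_sym_one (a b c : ℤ) (h : validSym a b c 1) :
    dTheta (sym a b c 1) = sym (a+1) b c 0 - sym a (b+1) c 0 + sym a b (c+1) 0 := by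
  rw [sym, dif_pos h]
  rw [dTheta]
  erw [Finsupp.lsum_single]
  simp [dAux]

/-- For even `n ≥ 4`, `d(V_1) ⊆ V_0`, and every element of `V_0` is congruent
modulo `d(V_1)` to a `ℚ`-linear combination of symbols `[0,b,c]^0` with
`0 < b < c` and `b + c = n`. -/
theorem quotient_spanned_by_zero_first_entry (n : ℤ) (hn : 4 ≤ n) (hne : Even n) :
    Submodule.map dTheta (V1 n) ≤ V0 n ∧
    ∀ x ∈ V0 n, ∃ y ∈ Submodule.span ℚ
        {z | ∃ b c : ℤ, 0 < b ∧ b < c ∧ b + c = n ∧ z = sym 0 b c 0},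
      x - y ∈ Submodule.map dTheta (V1 n) := by
  classical
  set S := Submodule.span ℚ
      {z | ∃ b c : ℤ, 0 < b ∧ b < c ∧ b + c = n ∧ z = sym 0 b c 0} with hS
  set W := Submodule.map dTheta (V1 n) with hWdef
  have hW : W ≤ V0 n := by
    rw [hWdef, Submodule.map_le_iff_le_comap, V1, Submodule.span_le]
    rintro x ⟨a, b, c, hsum, rfl⟩
    simp only [SetLike.mem_coe, Submodule.mem_comap]
    by_cases h : validSym a b c 1
    · rw [dTheta_sym_one a b c h]
      have h1 : sym (a+1) b c 0 ∈ V0 n := Submodule.subset_span ⟨a+1, b, c, by omega, rfl⟩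
      have h2 : sym a (b+1) c 0 ∈ V0 n := Submodule.subset_span ⟨a, b+1, c, by omega, rfl⟩
      have h3 : sym a b (c+1) 0 ∈ V0 n := Submodule.subset_span ⟨a, b, c+1, by omega, rfl⟩
      exact add_mem (sub_mem h1 h2) h3
    · rw [sym, dif_neg h, map_zero]
      exact zero_mem _
  refine ⟨hW, ?_⟩
  have main : ∀ k : ℕ, ∀ b c : ℤ, (k : ℤ) + b + c = n → sym (k : ℤ) b c 0 ∈ S ⊔ W := by
    intro k
    induction k with
    | zero =>
      intro b c hbc
      push_cast at hbc ⊢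
      by_cases h : validSym 0 b c 0
      · exact Submodule.mem_sup_left
          (Submodule.subset_span ⟨b, c, h.2.1, h.2.2.1, by omega, rfl⟩)
      · rw [sym, dif_neg h]; exact zero_mem _
    | succ a ih =>
      intro b c hbc
      push_cast at hbc ⊢
      by_cases h : validSym ((a : ℤ)+1) b c 0
      · have hv1 : validSym (a : ℤ) b c 1 :=
          ⟨Int.natCast_nonneg a, by linarith [h.2.1], h.2.2.1, Or.inr (Or.inl rfl),
            by intro hx; exact absurd hx one_ne_zero,
            by intro hx; norm_num at hx⟩
        have hd := dTheta_sym_one (a : ℤ) b c hv1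
        have heq : sym ((a : ℤ)+1) b c 0
            = dTheta (sym (a : ℤ) b c 1) + sym (a : ℤ) (b+1) c 0 - sym (a : ℤ) b (c+1) 0 := by
          rw [hd]; abel
        rw [heq]
        have hdW : dTheta (sym (a : ℤ) b c 1) ∈ W :=
          ⟨sym (a : ℤ) b c 1, Submodule.subset_span ⟨(a : ℤ), b, c, by omega, rfl⟩, rfl⟩
        exact sub_mem (add_mem (Submodule.mem_sup_right hdW) (ih (b+1) c (by omega)))
          (ih b (c+1) (by omega))
      · rw [sym, dif_neg h]; exact zero_mem _
  have key : V0 n ≤ S ⊔ W := by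
    rw [V0, Submodule.span_le]
    rintro x ⟨a, b, c, hsum, rfl⟩
    by_cases ha : 0 ≤ a
    · obtain ⟨k, rfl⟩ : ∃ k : ℕ, a = (k : ℤ) := ⟨a.toNat, (Int.toNat_of_nonneg ha).symm⟩
      exact main k b c hsum
    · have h : ¬ validSym a b c 0 := fun hv => ha hv.1
      simp only [sym, dif_neg h]; exact zero_mem _
  intro x hx
  obtain ⟨y, hy, z, hz, hyz⟩ := Submodule.mem_sup.mp (key hx)
  exact ⟨y, hy, by rw [← hyz, add_sub_cancel_left]; exact hz⟩
end
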